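/- Let ℓ ≥ 1 and let A ∈ ℝ^{ℓ×ℓ} be strictly lower triangular; let r be the relation on {1,…,ℓ} with r j i if and only if A_{ij} ≠ 0 (an edge j → i). Assume the faithfulness property: for all i ≠ j, ((I−A)^{-1})_{ij} ≠ 0 if and only if the transitive closure of r relates j to i (there is a directed path j → ⋯ → i). Let Λ be an invertible diagonal matrix, D_0 a diagonal matrix with diagonal entries in {±1}, and Q_1, Q_2 permutation matrices, and set B* = Q_1 Λ (I−A)^{-1} D_0 Q_2. Suppose R_1, R_2 are permutation matrices such that W := R_1 B* R_2 is lower triangular. Let W̃ be obtained from W by multiplying each column by the sign of its diagonal entry, and let W' be obtained from W̃ by dividing each row by its (then positive) diagonal entry. Then there exist a permutation σ of {1,…,ℓ} consistent with the DAG of A (i.e. A_{ij} ≠ 0 implies σ(j) < σ(i)) and a diagonal matrix D' with diagonal entries in {±1} such that I − (W')^{-1} = D' Q_σ^T A Q_σ D', where Q_σ is the permutation matrix of σ. Moreover, if all diagonal entries of Λ are positive, then D' = I, so I − (W')^{-1} = Q_σ^T A Q_σ. -/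

import Mathlib

open Matrix

/-- The permutation matrix of `σ`, with entries `(Q_σ)_{ij} = 1` iff `j = σ i`. -/
def permMatrix {p : ℕ} (σ : Equiv.Perm (Fin p)) : Matrix (Fin p) (Fin p) ℝ :=
  Matrix.of fun i j => if j = σ i then 1 else 0

namespace Stmt6Helpers

lemma permMatrix_mulX {p : ℕ} (σ : Equiv.Perm (Fin p)) (X : Matrix (Fin p) (Fin p) ℝ) :
    permMatrix σ * X = X.submatrix σ id := by
  ext i j
  simp [permMatrix, Matrix.mul_apply, ite_mul, Finset.sum_ite_eq']

lemma mulX_permMatrix {p : ℕ} (σ : Equiv.Perm (Fin p)) (X : Matrix (Fin p) (Fin p) ℝ) :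
    X * permMatrix σ = X.submatrix id σ.symm := by
  ext i j
  simp only [permMatrix, Matrix.mul_apply, Matrix.of_apply, mul_ite, mul_one, mul_zero,
    Matrix.submatrix_apply, id]
  have : ∀ k : Fin p, (if j = σ k then X i k else 0) = (if σ.symm j = k then X i k else 0) := by
    intro k
    congr 1
    rw [eq_comm, Equiv.symm_apply_eq, eq_comm]
  rw [Finset.sum_congr rfl (fun k _ => this k)]
  simp [Finset.sum_ite_eq]

lemma permMatrix_trans {p : ℕ} (e f : Equiv.Perm (Fin p)) :
    permMatrix (e.trans f) = permMatrix e * permMatrix f := by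
  rw [permMatrix_mulX]
  ext i j
  simp [permMatrix]
  congr

lemma permMatrix_refl {p : ℕ} : permMatrix (Equiv.refl (Fin p)) = 1 := by
  ext i j
  simp [permMatrix, Matrix.one_apply, eq_comm]

lemma permMatrix_mul_inv {p : ℕ} (σ : Equiv.Perm (Fin p)) :
    permMatrix σ * permMatrix σ⁻¹ = 1 := by
  rw [← permMatrix_trans]
  have : σ.trans σ⁻¹ = Equiv.refl (Fin p) := by
    ext x; simp
  rw [this, permMatrix_refl]

lemma permMatrix_inv_mul {p : ℕ} (σ : Equiv.Perm (Fin p)) :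
    permMatrix σ⁻¹ * permMatrix σ = 1 := by
  have := permMatrix_mul_inv σ⁻¹
  rwa [inv_inv] at this

lemma permMatrix_transpose {p : ℕ} (σ : Equiv.Perm (Fin p)) :
    (permMatrix σ)ᵀ = permMatrix σ⁻¹ := by
  ext i j
  simp only [permMatrix, Matrix.transpose_apply, Matrix.of_apply]
  congr 1
  rw [eq_iff_iff]
  constructor
  · intro h; subst h; simp
  · intro h; subst h; simp

lemma permMatrix_det_ne_zero {p : ℕ} (σ : Equiv.Perm (Fin p)) :
    (permMatrix σ).det ≠ 0 := by
  have h : (permMatrix σ).det * (permMatrix σ⁻¹).det = 1 := by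
    rw [← Matrix.det_mul, permMatrix_mul_inv, Matrix.det_one]
  exact left_ne_zero_of_mul_eq_one h

lemma cancel {p : ℕ} (X Y : Matrix (Fin p) (Fin p) ℝ) (h : X * Y = 1)
    (Z : Matrix (Fin p) (Fin p) ℝ) : X * (Y * Z) = Z := by
  rw [← Matrix.mul_assoc, h, Matrix.one_mul]

lemma perm_eq_of_le {p : ℕ} (α β : Equiv.Perm (Fin p)) (h : ∀ i, (β i : ℕ) ≤ (α i : ℕ)) :
    ∀ i, α i = β i := by
  have hsum : ∑ i, ((β i : ℕ)) = ∑ i, ((α i : ℕ)) := by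
    rw [Equiv.sum_comp α (fun j : Fin p => (j : ℕ)), Equiv.sum_comp β (fun j : Fin p => (j : ℕ))]
  have := (Finset.sum_eq_sum_iff_of_le (fun i _ => h i)).1 hsum
  intro i
  exact Fin.ext ((this i (Finset.mem_univ i)).symm)

end Stmt6Helpers

open Stmt6Helpers

theorem stmt6 (ℓ : ℕ) (hℓ : 1 ≤ ℓ)
    (A : Matrix (Fin ℓ) (Fin ℓ) ℝ)
    (hstrict : ∀ i j : Fin ℓ, i ≤ j → A i j = 0)
    (hfaith : ∀ i j : Fin ℓ, i ≠ j →
      ((1 - A)⁻¹ i j ≠ 0 ↔ Relation.TransGen (fun a b => A b a ≠ 0) j i))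
    (lam : Fin ℓ → ℝ) (hlam : ∀ i, lam i ≠ 0)
    (d0 : Fin ℓ → ℝ) (hd0 : ∀ i, d0 i = 1 ∨ d0 i = -1)
    (σ1 σ2 ρ1 ρ2 : Equiv.Perm (Fin ℓ))
    (W : Matrix (Fin ℓ) (Fin ℓ) ℝ)
    (hW : W = permMatrix ρ1 *
      (permMatrix σ1 * Matrix.diagonal lam * (1 - A)⁻¹ * Matrix.diagonal d0 *
        permMatrix σ2) * permMatrix ρ2)
    (hWlower : ∀ i j : Fin ℓ, i < j → W i j = 0)
    (Wt : Matrix (Fin ℓ) (Fin ℓ) ℝ)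
    (hWt : Wt = Matrix.of fun i j => Real.sign (W j j) * W i j)
    (W' : Matrix (Fin ℓ) (Fin ℓ) ℝ)
    (hW' : W' = Matrix.of fun i j => Wt i j / Wt i i) :
    ∃ (σ : Equiv.Perm (Fin ℓ)) (d' : Fin ℓ → ℝ),
      (∀ i j : Fin ℓ, A i j ≠ 0 → σ j < σ i) ∧
      (∀ i, d' i = 1 ∨ d' i = -1) ∧
      1 - W'⁻¹
        = Matrix.diagonal d' * (permMatrix σ)ᵀ * A * permMatrix σ * Matrix.diagonal d' ∧
      ((∀ i, 0 < lam i) → ∀ i, d' i = 1) := by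
  classical
  set M : Matrix (Fin ℓ) (Fin ℓ) ℝ := (1 - A)⁻¹ with hMdef
  set π : Equiv.Perm (Fin ℓ) := ρ1.trans σ1 with hπdef
  set τ : Equiv.Perm (Fin ℓ) := σ2.trans ρ2 with hτdef
  -- basic triangularity facts
  have hd0ne : ∀ i, d0 i ≠ 0 := by
    intro i; rcases hd0 i with h | h <;> rw [h] <;> norm_num
  have h1A : ∀ i j : Fin ℓ, i < j → (1 - A) i j = 0 := by
    intro i j hij
    simp [Matrix.sub_apply, Matrix.one_apply, hij.ne, hstrict i j hij.le]
  have h1Adiag : ∀ i, (1 - A) i i = 1 := by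
    intro i
    simp [Matrix.sub_apply, hstrict i i le_rfl]
  have hbt : (1 - A).BlockTriangular OrderDual.toDual := by
    intro i j h
    exact h1A i j h
  have hdet1A : (1 - A).det = 1 := by
    rw [Matrix.det_of_lowerTriangular _ hbt]
    simp [h1Adiag]
  have hunit : IsUnit (1 - A).det := by rw [hdet1A]; exact isUnit_one
  have hinv : Invertible (1 - A) := (1 - A).invertibleOfIsUnitDet hunit
  have hMmul : M * (1 - A) = 1 := Matrix.nonsing_inv_mul _ hunit
  have hMbt : M.BlockTriangular OrderDual.toDual :=
    Matrix.blockTriangular_inv_of_blockTriangular hbt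
  have hMlow : ∀ i j : Fin ℓ, i < j → M i j = 0 := by
    intro i j h
    exact hMbt h
  have hMdiag : ∀ i, M i i = 1 := by
    intro i
    have h : (M * (1 - A)) i i = (1 : Matrix (Fin ℓ) (Fin ℓ) ℝ) i i := by rw [hMmul]
    rw [Matrix.mul_apply, Matrix.one_apply_eq] at h
    rw [Fintype.sum_eq_single i ?hz] at h
    · rw [h1Adiag, mul_one] at h; exact h
    case hz =>
      intro k hk
      rcases lt_or_gt_of_ne hk with hlt | hgt
      · rw [h1A k i hlt, mul_zero]
      · rw [hMlow i k hgt, zero_mul]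
  -- entrywise formula for W
  have hWmat : W = permMatrix π * (Matrix.diagonal lam * M * Matrix.diagonal d0) * permMatrix τ := by
    rw [hW, hπdef, hτdef, permMatrix_trans, permMatrix_trans]
    simp only [Matrix.mul_assoc]
  have hWapp : ∀ i j, W i j = lam (π i) * M (π i) (τ.symm j) * d0 (τ.symm j) := by
    intro i j
    rw [hWmat, mulX_permMatrix, permMatrix_mulX]
    simp [Matrix.diagonal_mul, Matrix.mul_diagonal]
  -- det W ≠ 0, hence diagonal of W nonzero
  have hdetW : W.det ≠ 0 := by
    rw [hWmat]
    have hdet : (permMatrix π * (Matrix.diagonal lam * M * Matrix.diagonal d0) *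
        permMatrix τ).det = (permMatrix π).det *
        ((Matrix.diagonal lam).det * M.det * (Matrix.diagonal d0).det) * (permMatrix τ).det := by
      simp only [Matrix.det_mul]
    rw [hdet]
    have hdM : M.det ≠ 0 := by
      rw [hMdef, Matrix.det_nonsing_inv, hdet1A]; norm_num
    have hdl : (Matrix.diagonal lam).det ≠ 0 := by
      rw [Matrix.det_diagonal]
      exact Finset.prod_ne_zero_iff.2 fun i _ => hlam i
    have hdd : (Matrix.diagonal d0).det ≠ 0 := by
      rw [Matrix.det_diagonal]
      exact Finset.prod_ne_zero_iff.2 fun i _ => hd0ne i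
    exact mul_ne_zero (mul_ne_zero (permMatrix_det_ne_zero π)
      (mul_ne_zero (mul_ne_zero hdl hdM) hdd)) (permMatrix_det_ne_zero τ)
  have hWbt : W.BlockTriangular OrderDual.toDual := by
    intro i j h
    exact hWlower i j h
  have hdiagW : ∀ i, W i i ≠ 0 := by
    intro i hi
    apply hdetW
    rw [Matrix.det_of_lowerTriangular W hWbt]
    exact Finset.prod_eq_zero (Finset.mem_univ i) hi
  -- τ.symm = π
  have hkey : ∀ i, (τ.symm i : ℕ) ≤ (π i : ℕ) := by
    intro i
    by_contra hlt
    push_neg at hlt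
    have hfin : π i < τ.symm i := hlt
    apply hdiagW i
    rw [hWapp i i, hMlow _ _ hfin, mul_zero, zero_mul]
  have hπτ : ∀ i, τ.symm i = π i := by
    intro i
    exact ((perm_eq_of_le π τ⁻¹ hkey) i).symm
  have hWapp2 : ∀ i j, W i j = lam (π i) * M (π i) (π j) * d0 (π j) := by
    intro i j
    rw [hWapp, hπτ]
  have hWdiag : ∀ i, W i i = lam (π i) * d0 (π i) := by
    intro i
    rw [hWapp2, hMdiag, mul_one]
  -- the sign vector
  set d' : Fin ℓ → ℝ := fun i => if 0 < lam (π i) then (1 : ℝ) else -1 with hd'def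
  have hd'cases : ∀ i, d' i = 1 ∨ d' i = -1 := by
    intro i
    by_cases h : 0 < lam (π i)
    · left; simp [hd'def, h]
    · right; simp [hd'def, h]
  have hd'sq : ∀ i, d' i * d' i = 1 := by
    intro i; rcases hd'cases i with h | h <;> rw [h] <;> norm_num
  have hsign : ∀ j, Real.sign (W j j) = d' j * d0 (π j) := by
    intro j
    rw [hWdiag j]
    rcases (hlam (π j)).lt_or_gt with hl | hl
    · have hd'j : d' j = -1 := by rw [hd'def]; exact if_neg (not_lt.2 hl.le)
      rcases hd0 (π j) with h | h
      · rw [h, mul_one, Real.sign_of_neg hl, hd'j]; ring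
      · rw [h, mul_neg, mul_one, Real.sign_neg, Real.sign_of_neg hl, hd'j]; ring
    · have hd'j : d' j = 1 := by rw [hd'def]; exact if_pos hl
      rcases hd0 (π j) with h | h
      · rw [h, mul_one, Real.sign_of_pos hl, hd'j]; ring
      · rw [h, mul_neg, mul_one, Real.sign_neg, Real.sign_of_pos hl, hd'j]; ring
  have hd0sq : ∀ i, d0 i * d0 i = 1 := by
    intro i; rcases hd0 i with h | h <;> rw [h] <;> norm_num
  -- entrywise formula for W'
  have key : ∀ (a b e f L m : ℝ), a * a = 1 → b * b = 1 → e * e = 1 → f * f = 1 → L ≠ 0 →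
      (b * f * (L * m * f)) / (a * e * (L * e)) = a * m * b := by
    intro a b e f L m ha hb he hf hL
    have ha' : a ≠ 0 := fun h => by simp [h] at ha
    have he' : e ≠ 0 := fun h => by simp [h] at he
    rw [div_eq_iff (mul_ne_zero (mul_ne_zero ha' he') (mul_ne_zero hL he'))]
    linear_combination (b * L * m) * hf - (m * b * L * e * e) * ha - (m * b * L) * he
  have hW'app : ∀ i j, W' i j = d' i * M (π i) (π j) * d' j := by
    intro i j
    rw [hW']
    simp only [Matrix.of_apply]
    rw [hWt]
    simp only [Matrix.of_apply]
    rw [hsign i, hsign j, hWapp2 i j, hWdiag i]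
    exact key (d' i) (d' j) (d0 (π i)) (d0 (π j)) (lam (π i)) (M (π i) (π j))
      (hd'sq i) (hd'sq j) (hd0sq (π i)) (hd0sq (π j)) (hlam (π i))
  set D : Matrix (Fin ℓ) (Fin ℓ) ℝ := Matrix.diagonal d' with hDdef
  have hDD : D * D = 1 := by
    rw [hDdef, Matrix.diagonal_mul_diagonal]
    have : (fun i => d' i * d' i) = fun _ => (1 : ℝ) := funext hd'sq
    rw [this, Matrix.diagonal_one]
  have hRHS : ∀ (X : Matrix (Fin ℓ) (Fin ℓ) ℝ) (i j : Fin ℓ),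
      (D * permMatrix π * X * permMatrix π⁻¹ * D) i j = d' i * X (π i) (π j) * d' j := by
    intro X i j
    rw [Matrix.mul_assoc D (permMatrix π) X, permMatrix_mulX,
      Matrix.mul_assoc D _ (permMatrix π⁻¹), mulX_permMatrix, hDdef,
      Matrix.mul_diagonal, Matrix.diagonal_mul]
    simp [Matrix.submatrix_apply, Equiv.Perm.inv_def]
  have hW'mat : W' = D * permMatrix π * M * permMatrix π⁻¹ * D := by
    ext i j
    rw [hW'app i j, hRHS M i j]
  set C : Matrix (Fin ℓ) (Fin ℓ) ℝ := D * permMatrix π * (1 - A) * permMatrix π⁻¹ * D with hCdef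
  have hW'C : W' * C = 1 := by
    rw [hW'mat, hCdef]
    simp only [Matrix.mul_assoc]
    rw [cancel _ _ hDD, cancel _ _ (permMatrix_inv_mul π), cancel _ _ hMmul,
      cancel _ _ (permMatrix_mul_inv π), hDD]
  have hW'inv : W'⁻¹ = C := Matrix.inv_eq_right_inv hW'C
  have hX1 : D * permMatrix π * permMatrix π⁻¹ * D = 1 := by
    rw [Matrix.mul_assoc D (permMatrix π) (permMatrix π⁻¹), permMatrix_mul_inv,
      Matrix.mul_one, hDD]
  have h1C : 1 - C = D * permMatrix π * A * permMatrix π⁻¹ * D := by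
    rw [hCdef, mul_sub (D * permMatrix π) 1 A, mul_one, sub_mul, sub_mul, hX1]
    exact sub_sub_cancel 1 _
  refine ⟨π⁻¹, d', ?_, hd'cases, ?_, ?_⟩
  · intro i j hAij
    have hji : j < i := by
      by_contra hc
      push_neg at hc
      exact hAij (hstrict i j hc)
    have hne : i ≠ j := ne_of_gt hji
    have hMij : M i j ≠ 0 := (hfaith i j hne).2 (Relation.TransGen.single hAij)
    have hnl : ¬ (π⁻¹ i < π⁻¹ j) := by
      intro hlt
      have h0 := hWapp2 (π⁻¹ i) (π⁻¹ j)
      rw [hWlower _ _ hlt, Equiv.Perm.inv_def, Equiv.apply_symm_apply, Equiv.apply_symm_apply] at h0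
      rcases mul_eq_zero.1 h0.symm with h | h
      · rcases mul_eq_zero.1 h with h' | h'
        · exact hlam i h'
        · exact hMij h'
      · exact hd0ne j h
    have hne' : π⁻¹ j ≠ π⁻¹ i := fun h => hne ((Equiv.injective π⁻¹ h).symm)
    exact lt_of_le_of_ne (not_lt.1 hnl) hne'
  · rw [hW'inv, permMatrix_transpose, inv_inv]
    exact h1C
  · intro hpos i
    rw [hd'def]
    exact if_pos (hpos (π i))
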